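/- Let 2 ≤ k ≤ r ≤ n be integers and let α be a real number with α > k - 1 and α ≤ r. There is a constant c = c(α,k,r) > 0 (one may take c = (k-1)!·(1 - 2^{k-1-α}) / Σ_{j=k}^{r} C(2k-2,j)) such that every ordered r-graph H on [n] with e(H) = d·n^α edges contains, for some m ∈ [n], an interval k-partite subgraph H' with parts of size at most m and e(H') ≥ c·d·m^α. -/

import Mathlib

/-- An interval in ℕ: a set of consecutive integers. -/
def IsIntervalN (I : Finset ℕ) : Prop := ∃ a b : ℕ, I = Finset.Icc a b

/-- Every element of `I` is smaller than every element of `J`. -/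
def Precedes (I J : Finset ℕ) : Prop := ∀ x ∈ I, ∀ y ∈ J, x < y

/-- An ordered hypergraph `H` is interval k-partite with parts of size at most `m`:
there are ℓ ≥ k disjoint intervals I₀ < I₁ < ⋯ < I_{ℓ-1}, each of size at most `m`,
such that every edge of `H` is contained in their union and intersects each of them. -/
def IntervalKPartiteB (k m : ℕ) (H : Finset (Finset ℕ)) : Prop :=
  ∃ ℓ, k ≤ ℓ ∧ ∃ I : ℕ → Finset ℕ,
    (∀ j < ℓ, IsIntervalN (I j)) ∧
    (∀ j < ℓ, (I j).card ≤ m) ∧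
    (∀ j j', j < j' → j' < ℓ → Precedes (I j) (I j')) ∧
    ∀ e ∈ H, (∀ x ∈ e, ∃ j < ℓ, x ∈ I j) ∧ (∀ j < ℓ, (e ∩ I j).Nonempty)

/-- An ordered hypergraph `H` is interval k-partite: there are ℓ ≥ k disjoint
intervals I₀ < I₁ < ⋯ < I_{ℓ-1} such that every edge of `H` is contained in
their union and intersects each of them. -/
def IntervalKPartite (k : ℕ) (H : Finset (Finset ℕ)) : Prop :=
  ∃ ℓ, k ≤ ℓ ∧ ∃ I : ℕ → Finset ℕ,
    (∀ j < ℓ, IsIntervalN (I j)) ∧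
    (∀ j j', j < j' → j' < ℓ → Precedes (I j) (I j')) ∧
    ∀ e ∈ H, (∀ x ∈ e, ∃ j < ℓ, x ∈ I j) ∧ (∀ j < ℓ, (e ∩ I j).Nonempty)

/-- An ordered hypergraph `H` is interval r-partite in the exact sense: there are
intervals I₀ < I₁ < ⋯ < I_{r-1} such that every edge of `H` has exactly one
vertex in each of them (and is contained in their union). -/
def IntervalPartiteExact (r : ℕ) (H : Finset (Finset ℕ)) : Prop :=
  ∃ I : ℕ → Finset ℕ,
    (∀ j < r, IsIntervalN (I j)) ∧
    (∀ j j', j < j' → j' < r → Precedes (I j) (I j')) ∧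
    ∀ e ∈ H, (∀ x ∈ e, ∃ j < r, x ∈ I j) ∧ (∀ j < r, (e ∩ I j).card = 1)


open Finset
namespace SplitAux

def idx (t i x : ℕ) : ℕ := (x - 1) / 2 ^ (t - i)

def met (t i : ℕ) (e : Finset ℕ) : Finset ℕ := e.image (idx t i)

def Dint (t i s : ℕ) : Finset ℕ := Finset.Icc (s * 2 ^ (t - i) + 1) ((s + 1) * 2 ^ (t - i))

lemma div_char {w s x : ℕ} (hw : 0 < w) (hx : 1 ≤ x) :
    (s * w + 1 ≤ x ∧ x ≤ (s + 1) * w) ↔ (x - 1) / w = s := by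
  have hsm : (s + 1) * w = s * w + w := by ring
  have hsm2 : Nat.succ s * w = s * w + w := Nat.succ_mul s w
  constructor
  · rintro ⟨h1, h2⟩
    exact Nat.div_eq_of_lt_le (by omega) (by omega)
  · intro h
    have hd := Nat.div_add_mod (x - 1) w
    have hm := Nat.mod_lt (x - 1) hw
    have hcm : w * ((x - 1) / w) = ((x - 1) / w) * w := mul_comm _ _
    rw [h] at hd hcm
    omega

lemma mem_Dint {t i s x : ℕ} (hx : 1 ≤ x) : x ∈ Dint t i s ↔ idx t i x = s := by
  have hw : 0 < 2 ^ (t - i) := pow_pos (by norm_num) _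
  rw [Dint, idx, mem_Icc]
  exact div_char hw hx

lemma card_Dint (t i s : ℕ) : (Dint t i s).card = 2 ^ (t - i) := by
  rw [Dint, Nat.card_Icc, add_one_mul]
  generalize 2 ^ (t - i) = w
  omega

lemma card_met_zero {t n : ℕ} {e : Finset ℕ} (he : e.Nonempty) (hsub : e ⊆ Finset.Icc 1 n)
    (hn : n ≤ 2 ^ t) : (met t 0 e).card = 1 := by
  have : met t 0 e = {0} := by
    apply Finset.eq_singleton_iff_nonempty_unique_mem.2
    refine ⟨he.image _, ?_⟩
    intro y hy
    obtain ⟨x, hx, rfl⟩ := Finset.mem_image.1 hy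
    have hx' := Finset.mem_Icc.1 (hsub hx)
    have h2 : x - 1 < 2 ^ t := by omega
    simp only [idx, Nat.sub_zero]
    exact Nat.div_eq_of_lt h2
  simp [this]

lemma card_met_top {t n r : ℕ} {e : Finset ℕ} (hsub : e ⊆ Finset.Icc 1 n) (hc : e.card = r) :
    (met t t e).card = r := by
  rw [met, Finset.card_image_of_injOn, hc]
  intro a ha b hb hab
  have h1 := Finset.mem_Icc.1 (hsub ha)
  have h2 := Finset.mem_Icc.1 (hsub hb)
  simp only [idx, Nat.sub_self, pow_zero, Nat.div_one] at hab
  omega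

lemma met_pred {t i : ℕ} (hi1 : 1 ≤ i) (hit : i ≤ t) (e : Finset ℕ) :
    met t (i - 1) e = (met t i e).image (· / 2) := by
  rw [met, met, Finset.image_image]
  apply Finset.image_congr
  intro x _
  simp only [Function.comp, idx]
  rw [Nat.div_div_eq_div_mul, ← pow_succ]
  congr 2
  omega

lemma idx_lt {t i n x : ℕ} (hit : i ≤ t) (hx : x ∈ Finset.Icc 1 n) (hn : n ≤ 2 ^ t) :
    idx t i x < 2 ^ i := by
  rw [Finset.mem_Icc] at hx
  have h : x - 1 < 2 ^ (t - i) * 2 ^ i := by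
    rw [← pow_add]
    have ht : t - i + i = t := by omega
    rw [ht]; omega
  exact Nat.div_lt_of_lt_mul h

open scoped Classical in
noncomputable def i0 (k t : ℕ) (e : Finset ℕ) : ℕ :=
  if h : ∃ i, k ≤ (met t i e).card then Nat.find h else 0

lemma i0_spec {k t n r : ℕ} {e : Finset ℕ} (hk : 2 ≤ k) (hkr : k ≤ r)
    (hsub : e ⊆ Finset.Icc 1 n) (hc : e.card = r) (hn : n ≤ 2 ^ t) :
    1 ≤ i0 k t e ∧ i0 k t e ≤ t ∧ k ≤ (met t (i0 k t e) e).card ∧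
      (met t (i0 k t e - 1) e).card ≤ k - 1 := by
  classical
  have hex : ∃ i, k ≤ (met t i e).card := ⟨t, by rw [card_met_top hsub hc]; exact hkr⟩
  have hi0 : i0 k t e = Nat.find hex := by rw [i0, dif_pos hex]
  rw [hi0]
  have hne : e.Nonempty := by rw [← Finset.card_pos, hc]; omega
  have h0 : ¬ k ≤ (met t 0 e).card := by rw [card_met_zero hne hsub hn]; omega
  have h1 : 1 ≤ Nat.find hex := by
    rcases Nat.eq_zero_or_pos (Nat.find hex) with h | h
    · exact absurd (h ▸ Nat.find_spec hex) h0
    · exact h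
  have hle : Nat.find hex ≤ t := Nat.find_le (by rw [card_met_top hsub hc]; exact hkr)
  have hmin := Nat.find_min hex (m := Nat.find hex - 1) (by omega)
  exact ⟨h1, hle, Nat.find_spec hex, by omega⟩


/-- elements of `S` that are the least of their sibling-pair in `S` -/
def W0 (S : Finset ℕ) : Finset ℕ := S.filter (fun s => s % 2 = 0 ∨ s - 1 ∉ S)

def Valid (k r M : ℕ) (S : Finset ℕ) : Prop :=
  k ≤ S.card ∧ S.card ≤ r ∧ (S.image (· / 2)).card ≤ k - 1 ∧ ∀ s ∈ S, s < 2 * M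

lemma W0_card_le {k r M : ℕ} {S : Finset ℕ} (hv : Valid k r M S) : (W0 S).card ≤ k - 1 := by
  refine le_trans (Finset.card_le_card_of_injOn (· / 2) ?_ ?_) hv.2.2.1
  · intro a ha
    exact Finset.mem_image_of_mem _ (Finset.mem_filter.1 ha).1
  · intro a ha b hb hab
    simp only [Finset.mem_coe] at ha hb
    have hab2 : a / 2 = b / 2 := hab
    obtain ⟨haS, hap⟩ := Finset.mem_filter.1 ha
    obtain ⟨hbS, hbp⟩ := Finset.mem_filter.1 hb
    by_contra hne
    -- a and b are distinct siblings; the odd one violates the filter property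
    rcases Nat.lt_or_ge a b with h | h
    · have hb1 : b % 2 = 1 ∧ b - 1 = a := by omega
      rcases hbp with h2 | h2
      · omega
      · exact h2 (hb1.2 ▸ haS)
    · have ha1 : a % 2 = 1 ∧ a - 1 = b := by omega
      rcases hap with h2 | h2
      · omega
      · exact h2 (ha1.2 ▸ hbS)

open scoped Classical in
noncomputable def Wf (k : ℕ) (S : Finset ℕ) : Finset ℕ :=
  if h : (W0 S).card ≤ k - 1 ∧ k - 1 ≤ S.card then
    (Finset.exists_subsuperset_card_eq (Finset.filter_subset _ S) h.1 h.2).choose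
  else ∅

lemma Wf_spec {k r M : ℕ} {S : Finset ℕ} (hk : 2 ≤ k) (hv : Valid k r M S) :
    W0 S ⊆ Wf k S ∧ Wf k S ⊆ S ∧ (Wf k S).card = k - 1 := by
  classical
  have h : (W0 S).card ≤ k - 1 ∧ k - 1 ≤ S.card := ⟨W0_card_le hv, le_trans (by omega) hv.1⟩
  rw [Wf, dif_pos h]
  exact (Finset.exists_subsuperset_card_eq (Finset.filter_subset _ S) h.1 h.2).choose_spec

noncomputable def ds (k : ℕ) (S : Finset ℕ) (s : ℕ) : ℕ := if s ∈ Wf k S then s else s - 1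

lemma ds_cases {k r M : ℕ} {S : Finset ℕ} (hk : 2 ≤ k) (hv : Valid k r M S) {s : ℕ}
    (hs : s ∈ S) :
    (s ∈ Wf k S ∧ ds k S s = s) ∨
    (s ∉ Wf k S ∧ s % 2 = 1 ∧ s - 1 ∈ S ∧ ds k S s = s - 1 ∧ s - 1 ∈ Wf k S) := by
  obtain ⟨hW0sub, hWsub, hcard⟩ := Wf_spec hk hv
  by_cases h : s ∈ Wf k S
  · exact Or.inl ⟨h, if_pos h⟩
  · right
    have h0 : s ∉ W0 S := fun hc => h (hW0sub hc)
    have h1 : ¬(s % 2 = 0 ∨ s - 1 ∉ S) := fun hc => h0 (Finset.mem_filter.2 ⟨hs, hc⟩)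
    push_neg at h1
    have hodd : s % 2 = 1 := by omega
    have hmem : s - 1 ∈ W0 S := by
      refine Finset.mem_filter.2 ⟨h1.2, Or.inl (by omega)⟩
    exact ⟨h, hodd, h1.2, if_neg h, hW0sub hmem⟩

lemma ds_mem {k r M : ℕ} {S : Finset ℕ} (hk : 2 ≤ k) (hv : Valid k r M S) {s : ℕ}
    (hs : s ∈ S) : ds k S s ∈ Wf k S := by
  rcases ds_cases hk hv hs with ⟨h1, h2⟩ | ⟨_, _, _, h4, h5⟩
  · rw [h2]; exact h1
  · rw [h4]; exact h5

/-- condition making the encoding well-defined -/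
def Cond (k : ℕ) (S : Finset ℕ) : Prop :=
  (Wf k S).card = k - 1 ∧ ∀ s ∈ S, ds k S s ∈ Wf k S

lemma valid_cond {k r M : ℕ} {S : Finset ℕ} (hk : 2 ≤ k) (hv : Valid k r M S) : Cond k S :=
  ⟨(Wf_spec hk hv).2.2, fun _ hs => ds_mem hk hv hs⟩

open scoped Classical in
/-- The encoding map: a valid `S` together with a permutation of `Fin (k-1)` is encoded
as a pair (function to parents, incidence set). -/
noncomputable def phi (k r M : ℕ) (hM : 0 < M) (S : Finset ℕ) (σ : Equiv.Perm (Fin (k - 1))) :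
    (Fin (k - 1) → Fin M) × Finset (Fin (k - 1) × Fin 2) :=
  if h : Cond k S then
    (fun a => ⟨((((Wf k S).orderIsoOfFin h.1) (σ a)) : ℕ) / 2 % M, Nat.mod_lt _ hM⟩,
      S.attach.image (fun s =>
        (σ.symm (((Wf k S).orderIsoOfFin h.1).symm ⟨ds k S s.1, h.2 s.1 s.2⟩),
          (⟨s.1 % 2, Nat.mod_lt _ (by norm_num)⟩ : Fin 2))))
  else (fun _ => ⟨0, hM⟩, ∅)

/-- decoding -/
def dec {κ : ℕ} (M : ℕ) (p : (Fin κ → Fin M) × Finset (Fin κ × Fin 2)) : Finset ℕ :=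
  p.2.image (fun ab => 2 * ((p.1 ab.1 : ℕ)) + (ab.2 : ℕ))

lemma phi_dec {k r M : ℕ} (hk : 2 ≤ k) (hM : 0 < M) {S : Finset ℕ} (hv : Valid k r M S)
    (σ : Equiv.Perm (Fin (k - 1))) : dec M (phi k r M hM S σ) = S := by
  classical
  have hC := valid_cond hk hv
  obtain ⟨hW0sub, hWsub, hcard⟩ := Wf_spec hk hv
  rw [phi, dif_pos hC, dec]
  simp only [Finset.image_image]
  have key : ∀ s ∈ S.attach,
      (2 * ((((Wf k S).orderIsoOfFin hC.1)
          (σ (σ.symm (((Wf k S).orderIsoOfFin hC.1).symm ⟨ds k S s.1, hC.2 s.1 s.2⟩))) : ℕ) / 2 % M)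
        + (s.1 % 2)) = s.1 := by
    intro s _
    rw [Equiv.apply_symm_apply, OrderIso.apply_symm_apply]
    have hds : ds k S s.1 ∈ Wf k S := hC.2 s.1 s.2
    have hlt : ds k S s.1 < 2 * M := hv.2.2.2 _ (hWsub hds)
    have hlt2 : ds k S s.1 / 2 < M := by omega
    rw [Nat.mod_eq_of_lt hlt2]
    rcases ds_cases hk hv s.2 with ⟨_, h2⟩ | ⟨_, hodd, _, h4, _⟩
    · rw [h2]; omega
    · rw [h4]; omega
  calc S.attach.image _ = S.attach.image (fun s => s.1) := Finset.image_congr key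
    _ = S := Finset.attach_image_val

lemma phi_T_card {k r M : ℕ} (hk : 2 ≤ k) (hM : 0 < M) {S : Finset ℕ} (hv : Valid k r M S)
    (σ : Equiv.Perm (Fin (k - 1))) : ((phi k r M hM S σ).2).card = S.card := by
  classical
  have hC := valid_cond hk hv
  rw [phi, dif_pos hC]
  dsimp only
  refine (Finset.card_image_of_injOn ?_).trans (Finset.card_attach)
  intro s hs s' hs' heq
  simp only [Prod.mk.injEq] at heq
  obtain ⟨h1, h2⟩ := heq
  have h1' : ds k S s.1 = ds k S s'.1 := by
    have := congrArg (fun x => ((((Wf k S).orderIsoOfFin hC.1) (σ x)) : ℕ)) h1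
    simpa [Equiv.apply_symm_apply, OrderIso.apply_symm_apply] using this
  have h2' : s.1 % 2 = s'.1 % 2 := by
    simpa [Fin.mk.injEq] using h2
  apply Subtype.ext
  rcases ds_cases hk hv s.2 with ⟨_, e1⟩ | ⟨_, o1, _, e1, _⟩ <;>
    rcases ds_cases hk hv s'.2 with ⟨_, e2⟩ | ⟨_, o2, _, e2, _⟩ <;> omega

lemma phi_inj {k r M : ℕ} (hk : 2 ≤ k) (hM : 0 < M) {S S' : Finset ℕ}
    (hv : Valid k r M S) (hv' : Valid k r M S')
    {σ τ : Equiv.Perm (Fin (k - 1))}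
    (h : phi k r M hM S σ = phi k r M hM S' τ) : S = S' ∧ σ = τ := by
  classical
  have hSS : S = S' := by
    have := congrArg (dec M) h
    rwa [phi_dec hk hM hv, phi_dec hk hM hv'] at this
  subst hSS
  refine ⟨rfl, ?_⟩
  have hC := valid_cond hk hv
  obtain ⟨hW0sub, hWsub, hcard⟩ := Wf_spec hk hv
  rw [phi, dif_pos hC, phi, dif_pos hC, Prod.mk.injEq] at h
  obtain ⟨hg, hT⟩ := h
  apply Equiv.ext
  intro a
  set o := (Wf k S).orderIsoOfFin hC.1 with ho
  set y := o (σ a) with hy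
  set z := o (τ a) with hz
  have hga : (((y : ℕ)) / 2 % M) = (((z : ℕ)) / 2 % M) :=
    congrArg (fun g => ((g a : Fin M) : ℕ)) hg
  have hyS : (y : ℕ) ∈ S := hWsub y.2
  have hzS : (z : ℕ) ∈ S := hWsub z.2
  have hylt : (y : ℕ) < 2 * M := hv.2.2.2 _ hyS
  have hzlt : (z : ℕ) < 2 * M := hv.2.2.2 _ hzS
  have hhalf : (y : ℕ) / 2 = (z : ℕ) / 2 := by
    rwa [Nat.mod_eq_of_lt (by omega), Nat.mod_eq_of_lt (by omega)] at hga
  by_cases hyz : (y : ℕ) = (z : ℕ)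
  · have hyz' : y = z := Subtype.ext hyz
    have := congrArg o.symm hyz'
    rwa [OrderIso.symm_apply_apply, OrderIso.symm_apply_apply] at this
  · exfalso
    have hdsy : ds k S (y : ℕ) = (y : ℕ) := if_pos y.2
    have hsub_eq : (⟨ds k S (y : ℕ), hC.2 _ hyS⟩ : {x // x ∈ Wf k S}) = y := Subtype.ext hdsy
    have hyT : (a, (⟨(y : ℕ) % 2, Nat.mod_lt _ (by norm_num)⟩ : Fin 2)) ∈
        S.attach.image (fun s =>
          (σ.symm (o.symm ⟨ds k S s.1, hC.2 s.1 s.2⟩),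
            (⟨s.1 % 2, Nat.mod_lt _ (by norm_num)⟩ : Fin 2))) := by
      refine Finset.mem_image.2 ⟨⟨(y : ℕ), hyS⟩, Finset.mem_attach _ _, ?_⟩
      rw [Prod.mk.injEq]
      refine ⟨?_, rfl⟩
      rw [hsub_eq, hy, OrderIso.symm_apply_apply, Equiv.symm_apply_apply]
    rw [hT] at hyT
    obtain ⟨s, _, heq⟩ := Finset.mem_image.1 hyT
    rw [Prod.mk.injEq] at heq
    obtain ⟨h1, h2⟩ := heq
    have h1' : ds k S s.1 = (z : ℕ) := by
      have := congrArg (fun x => ((o (τ x)) : ℕ)) h1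
      simpa [Equiv.apply_symm_apply, OrderIso.apply_symm_apply] using this
    have h2' : s.1 % 2 = (y : ℕ) % 2 := by simpa [Fin.mk.injEq] using h2
    rcases ds_cases hk hv s.2 with ⟨hsW, e1⟩ | ⟨hsnW, o1, _, e1, _⟩
    · omega
    · have hs_eq_y : s.1 = (y : ℕ) := by omega
      exact hsnW (hs_eq_y ▸ y.2)

lemma card_T_filter (k r : ℕ) :
    ((Finset.univ : Finset (Finset (Fin (k - 1) × Fin 2))).filter
        (fun T => T.card ∈ Finset.Icc k r)).card
      = ∑ j ∈ Finset.Icc k r, Nat.choose ((k - 1) * 2) j := by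
  classical
  rw [Finset.card_eq_sum_card_fiberwise (f := Finset.card) (t := Finset.Icc k r)
    (s := (Finset.univ : Finset (Finset (Fin (k - 1) × Fin 2))).filter
      (fun T => T.card ∈ Finset.Icc k r))
    (fun T hT => (Finset.mem_filter.1 hT).2)]
  refine Finset.sum_congr rfl (fun j hj => ?_)
  have hset : ((Finset.univ : Finset (Finset (Fin (k - 1) × Fin 2))).filter
      (fun T => T.card ∈ Finset.Icc k r)).filter (fun T => T.card = j)
      = (Finset.univ : Finset (Finset (Fin (k - 1) × Fin 2))).filter (fun T => T.card = j) := by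
    rw [Finset.filter_filter]
    apply Finset.filter_congr
    intro T _
    constructor
    · exact fun h => h.2
    · exact fun h => ⟨h ▸ hj, h⟩
  rw [hset]
  have : (Finset.univ : Finset (Finset (Fin (k - 1) × Fin 2))).filter (fun T => T.card = j)
      = Finset.powersetCard j (Finset.univ : Finset (Fin (k - 1) × Fin 2)) := by
    rw [Finset.powersetCard_eq_filter, Finset.powerset_univ]
  rw [this, Finset.card_powersetCard, Finset.card_univ, Fintype.card_prod,
    Fintype.card_fin, Fintype.card_fin]

lemma count_classes {k r M : ℕ} (hk : 2 ≤ k) (hM : 0 < M) (V : Finset (Finset ℕ))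
    (hV : ∀ S ∈ V, Valid k r M S) :
    V.card * (k - 1).factorial ≤ M ^ (k - 1) * ∑ j ∈ Finset.Icc k r, Nat.choose (2 * k - 2) j := by
  classical
  have step := Finset.card_le_card_of_injOn
    (s := V ×ˢ (Finset.univ : Finset (Equiv.Perm (Fin (k - 1)))))
    (t := (Finset.univ : Finset (Fin (k - 1) → Fin M)) ×ˢ
      ((Finset.univ : Finset (Finset (Fin (k - 1) × Fin 2))).filter
        (fun T => T.card ∈ Finset.Icc k r)))
    (fun p => phi k r M hM p.1 p.2)
    (by
      rintro ⟨S, σ⟩ hp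
      rw [Finset.mem_coe, Finset.mem_product] at hp
      have hv := hV S hp.1
      rw [Finset.mem_coe, Finset.mem_product]
      refine ⟨Finset.mem_univ _, Finset.mem_filter.2 ⟨Finset.mem_univ _, ?_⟩⟩
      rw [phi_T_card hk hM hv σ, Finset.mem_Icc]
      exact ⟨hv.1, hv.2.1⟩)
    (by
      rintro ⟨S, σ⟩ hp ⟨S', τ⟩ hp' heq
      simp only [Finset.coe_product, Set.mem_prod, Finset.mem_coe] at hp hp'
      obtain ⟨hSS, hστ⟩ := phi_inj hk hM (hV S hp.1) (hV S' hp'.1) heq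
      exact Prod.ext hSS hστ)
  rw [Finset.card_product, Finset.card_product, Finset.card_univ, Finset.card_univ,
    Fintype.card_perm, Fintype.card_fin, card_T_filter] at step
  have hfun : Fintype.card (Fin (k - 1) → Fin M) = M ^ (k - 1) := by
    rw [Fintype.card_fun, Fintype.card_fin, Fintype.card_fin]
  rw [hfun] at step
  have hchoose : ∀ j, Nat.choose ((k - 1) * 2) j = Nat.choose (2 * k - 2) j := by
    intro j; congr 1; omega
  calc V.card * (k - 1).factorial
      ≤ M ^ (k - 1) * ∑ j ∈ Finset.Icc k r, Nat.choose ((k - 1) * 2) j := step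
    _ = M ^ (k - 1) * ∑ j ∈ Finset.Icc k r, Nat.choose (2 * k - 2) j := by
        congr 1; exact Finset.sum_congr rfl (fun j _ => hchoose j)

lemma partite {k t i : ℕ} (S : Finset ℕ) (H' : Finset (Finset ℕ))
    (hS : k ≤ S.card)
    (hmet : ∀ e ∈ H', met t i e = S)
    (hpos : ∀ e ∈ H', ∀ x ∈ e, 1 ≤ x) :
    IntervalKPartiteB k (2 ^ (t - i)) H' := by
  classical
  refine ⟨S.card, hS, ?_⟩
  set o := S.orderIsoOfFin rfl with ho
  refine ⟨fun j => if h : j < S.card then Dint t i (o ⟨j, h⟩) else ∅, ?_, ?_, ?_, ?_⟩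
  · intro j hj; dsimp only; rw [dif_pos hj]; exact ⟨_, _, rfl⟩
  · intro j hj; dsimp only; rw [dif_pos hj, card_Dint]
  · intro j j' hjj hj'
    have hj : j < S.card := lt_trans hjj hj'
    dsimp only
    rw [dif_pos hj, dif_pos hj']
    intro x hx y hy
    rw [Dint, Finset.mem_Icc] at hx hy
    have hlt : ((o ⟨j, hj⟩ : ℕ)) < ((o ⟨j', hj'⟩ : ℕ)) := by
      have hf : (⟨j, hj⟩ : Fin S.card) < ⟨j', hj'⟩ := Fin.mk_lt_mk.2 hjj
      exact Subtype.coe_lt_coe.2 (o.lt_iff_lt.2 hf)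
    have hmul : ((o ⟨j, hj⟩ : ℕ) + 1) * 2 ^ (t - i) ≤ ((o ⟨j', hj'⟩ : ℕ)) * 2 ^ (t - i) :=
      Nat.mul_le_mul_right _ hlt
    omega
  · intro e he
    constructor
    · intro x hx
      have h1 : 1 ≤ x := hpos e he x hx
      have hmem : idx t i x ∈ S := by rw [← hmet e he]; exact Finset.mem_image_of_mem _ hx
      refine ⟨(o.symm ⟨idx t i x, hmem⟩ : Fin S.card), Fin.is_lt _, ?_⟩
      dsimp only
      rw [dif_pos (Fin.is_lt _), mem_Dint h1]
      have heta : (⟨(o.symm ⟨idx t i x, hmem⟩ : Fin S.card).1, Fin.is_lt _⟩ : Fin S.card)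
          = o.symm ⟨idx t i x, hmem⟩ := by apply Fin.ext; rfl
      rw [heta, OrderIso.apply_symm_apply]
    · intro j hj
      dsimp only
      rw [dif_pos hj]
      have hmem : ((o ⟨j, hj⟩ : ℕ)) ∈ met t i e := by rw [hmet e he]; exact (o ⟨j, hj⟩).2
      obtain ⟨x, hx, hxi⟩ := Finset.mem_image.1 hmem
      exact ⟨x, Finset.mem_inter.2 ⟨hx, (mem_Dint (hpos e he x hx)).2 hxi⟩⟩

end SplitAux

open SplitAux in

/-- Theorem 2 (splitting theorem, case α > k-1): with
c = (k-1)!·(1 - 2^{k-1-α}) / Σ_{j=k}^r C(2k-2,j) one has c > 0, and every ordered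
r-graph H on [n] with d·n^α edges contains, for some m ∈ [n], an interval k-partite
subgraph H' with parts of size at most m and e(H') ≥ c·d·m^α. -/
theorem splitting_theorem_large_alpha (k r n : ℕ) (α : ℝ)
    (hk : 2 ≤ k) (hkr : k ≤ r) (hrn : r ≤ n)
    (hα₁ : (k : ℝ) - 1 < α) (hα₂ : α ≤ r)
    (d : ℝ) (hd : 0 < d)
    (H : Finset (Finset ℕ)) (hH : ∀ e ∈ H, e ⊆ Finset.Icc 1 n ∧ e.card = r)
    (hcard : (H.card : ℝ) = d * (n : ℝ) ^ α) :
    0 < ((k - 1).factorial : ℝ) * (1 - (2 : ℝ) ^ ((k : ℝ) - 1 - α))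
          / (∑ j ∈ Finset.Icc k r, (Nat.choose (2 * k - 2) j : ℝ)) ∧
    ∃ m : ℕ, 1 ≤ m ∧ m ≤ n ∧ ∃ H' ⊆ H, IntervalKPartiteB k m H' ∧
      ((k - 1).factorial : ℝ) * (1 - (2 : ℝ) ^ ((k : ℝ) - 1 - α))
          / (∑ j ∈ Finset.Icc k r, (Nat.choose (2 * k - 2) j : ℝ))
        * d * (m : ℝ) ^ α ≤ (H'.card : ℝ) := by
  classical
  have hn2 : 2 ≤ n := le_trans hk (le_trans hkr hrn)
  have hDpos : 0 < ∑ j ∈ Finset.Icc k r, ((2 * k - 2).choose j : ℝ) := by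
    apply Finset.sum_pos'
    · intro j _; positivity
    · refine ⟨k, Finset.mem_Icc.2 ⟨le_refl k, hkr⟩, ?_⟩
      have hkk : k ≤ 2 * k - 2 := by omega
      exact_mod_cast Nat.choose_pos hkk
  set X := (2 : ℝ) ^ ((k : ℝ) - 1 - α) with hX
  have hX0 : 0 < X := Real.rpow_pos_of_pos (by norm_num) _
  have hX1 : X < 1 := Real.rpow_lt_one_of_one_lt_of_neg (by norm_num) (by linarith)
  have hFpos : 0 < ((k - 1).factorial : ℝ) := by exact_mod_cast Nat.factorial_pos _
  have hcpos : 0 < ((k - 1).factorial : ℝ) * (1 - X)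
      / (∑ j ∈ Finset.Icc k r, ((2 * k - 2).choose j : ℝ)) :=
    div_pos (mul_pos hFpos (by linarith)) hDpos
  refine ⟨hcpos, ?_⟩
  by_contra hcon
  push_neg at hcon
  set c := ((k - 1).factorial : ℝ) * (1 - X)
      / (∑ j ∈ Finset.Icc k r, ((2 * k - 2).choose j : ℝ)) with hc
  set F := ((k - 1).factorial : ℝ) with hF
  set D := ∑ j ∈ Finset.Icc k r, ((2 * k - 2).choose j : ℝ) with hD
  -- dyadic setup
  set t := Nat.clog 2 n with ht
  have htn : n ≤ 2 ^ t := Nat.le_pow_clog (by norm_num) n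
  have ht1 : 1 ≤ t := Nat.clog_pos (by norm_num) (by omega)
  have ht2 : 2 ^ (t - 1) < n := by
    have h := Nat.pow_pred_clog_lt_self (b := 2) (by norm_num) (x := n) (by omega)
    simpa using h
  set key : Finset ℕ → ℕ × Finset ℕ :=
    fun e => (i0 k t e, met t (i0 k t e) e) with hkey
  set K := H.image key with hK
  have hnapos : (0 : ℝ) < (n : ℝ) ^ α := Real.rpow_pos_of_pos (by positivity) α
  have hHne : H.Nonempty := by
    rw [← Finset.card_pos]
    by_contra h
    push_neg at h
    have h0 : H.card = 0 := by omega
    rw [h0] at hcard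
    have := mul_pos hd hnapos
    simp only [Nat.cast_zero] at hcard
    linarith
  have hKne : K.Nonempty := hHne.image key
  -- edge facts
  have hspec : ∀ e ∈ H, 1 ≤ i0 k t e ∧ i0 k t e ≤ t ∧ k ≤ (met t (i0 k t e) e).card ∧
      (met t (i0 k t e - 1) e).card ≤ k - 1 := by
    intro e he
    exact i0_spec hk hkr (hH e he).1 (hH e he).2 htn
  have hmaps : ∀ κ ∈ K, κ.1 ∈ Finset.Icc 1 t := by
    intro κ hκ
    obtain ⟨e, he, rfl⟩ := Finset.mem_image.1 hκ
    exact Finset.mem_Icc.2 ⟨(hspec e he).1, (hspec e he).2.1⟩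
  -- each class is small by assumption
  have hclass : ∀ κ ∈ K, ((H.filter (fun e => key e = κ)).card : ℝ)
      < c * d * ((2 ^ (t - κ.1) : ℕ) : ℝ) ^ α := by
    intro κ hκ
    obtain ⟨e₀, he₀, hkeye₀⟩ := Finset.mem_image.1 hκ
    have hi1 : 1 ≤ κ.1 := (Finset.mem_Icc.1 (hmaps κ hκ)).1
    have hit : κ.1 ≤ t := (Finset.mem_Icc.1 (hmaps κ hκ)).2
    have hm1 : 1 ≤ 2 ^ (t - κ.1) := Nat.one_le_two_pow
    have hm2 : 2 ^ (t - κ.1) ≤ n := by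
      have : (2:ℕ) ^ (t - κ.1) ≤ 2 ^ (t - 1) := Nat.pow_le_pow_right (by norm_num) (by omega)
      omega
    have hpart : IntervalKPartiteB k (2 ^ (t - κ.1)) (H.filter (fun e => key e = κ)) := by
      apply partite κ.2
      · have : κ.2 = met t (i0 k t e₀) e₀ := by rw [← hkeye₀]
        rw [this]
        have : κ.1 = i0 k t e₀ := by rw [← hkeye₀]
        exact (hspec e₀ he₀).2.2.1
      · intro e he
        obtain ⟨heH, hekey⟩ := Finset.mem_filter.1 he
        have h1 : i0 k t e = κ.1 := congrArg Prod.fst hekey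
        have h2 : met t (i0 k t e) e = κ.2 := congrArg Prod.snd hekey
        rw [← h1, h2]
      · intro e he x hx
        have heH := (Finset.mem_filter.1 he).1
        exact (Finset.mem_Icc.1 ((hH e heH).1 hx)).1
    exact hcon (2 ^ (t - κ.1)) hm1 hm2 _ (Finset.filter_subset _ _) hpart
  -- counting per level
  have hcount : ∀ i ∈ Finset.Icc 1 t,
      ((K.filter (fun κ => κ.1 = i)).card : ℝ) * F ≤ ((2:ℝ) ^ (i - 1)) ^ (k - 1) * D := by
    intro i hi
    rw [Finset.mem_Icc] at hi
    set V := (K.filter (fun κ => κ.1 = i)).image Prod.snd with hV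
    have hVcard : (K.filter (fun κ => κ.1 = i)).card = V.card := by
      rw [hV]
      refine (Finset.card_image_of_injOn ?_).symm
      intro κ hκ κ' hκ' h2
      have e1 : κ.1 = i := (Finset.mem_filter.1 hκ).2
      have e2 : κ'.1 = i := (Finset.mem_filter.1 hκ').2
      exact Prod.ext (e1.trans e2.symm) h2
    have hvalid : ∀ S ∈ V, Valid k r (2 ^ (i - 1)) S := by
      intro S hS
      obtain ⟨κ, hκ, rfl⟩ := Finset.mem_image.1 hS
      obtain ⟨hκK, hκ1⟩ := Finset.mem_filter.1 hκ
      obtain ⟨e, he, rfl⟩ := Finset.mem_image.1 hκK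
      simp only [hkey] at hκ1 ⊢
      rw [hκ1]
      have hsp := hspec e he
      rw [hκ1] at hsp
      refine ⟨hsp.2.2.1, ?_, ?_, ?_⟩
      · rw [met]
        calc (e.image (idx t i)).card ≤ e.card := Finset.card_image_le
          _ = r := (hH e he).2
      · rw [← met_pred hi.1 hi.2]
        exact hsp.2.2.2
      · intro s hs
        obtain ⟨x, hx, rfl⟩ := Finset.mem_image.1 hs
        have hlt := idx_lt hi.2 ((hH e he).1 hx) htn
        have hpow : (2:ℕ) ^ i = 2 * 2 ^ (i - 1) := by
          rw [← pow_succ']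
          congr 1
          omega
        omega
    have hnat := count_classes hk (pow_pos (by norm_num) (i-1)) V hvalid
    have hcast : ((V.card * (k-1).factorial : ℕ) : ℝ)
        ≤ (((2^(i-1))^(k-1) * ∑ j ∈ Finset.Icc k r, (2*k-2).choose j : ℕ) : ℝ) :=
      Nat.cast_le.2 hnat
    push_cast at hcast
    rw [hVcard]
    exact hcast
  -- fiberwise decomposition
  have hfib : H.card = ∑ κ ∈ K, (H.filter (fun e => key e = κ)).card :=
    Finset.card_eq_sum_card_fiberwise (fun e he => Finset.mem_image_of_mem key he)
  have hsum1 : ∑ κ ∈ K, ((2 ^ (t - κ.1) : ℕ) : ℝ) ^ α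
      = ∑ i ∈ Finset.Icc 1 t,
          ((K.filter (fun κ => κ.1 = i)).card : ℝ) * ((2 ^ (t - i) : ℕ) : ℝ) ^ α := by
    rw [← Finset.sum_fiberwise_of_maps_to hmaps (fun κ => ((2 ^ (t - κ.1) : ℕ) : ℝ) ^ α)]
    refine Finset.sum_congr rfl (fun i hi => ?_)
    rw [Finset.sum_congr rfl (fun κ hκ => by rw [(Finset.mem_filter.1 hκ).2])]
    rw [Finset.sum_const, nsmul_eq_mul]
  -- the exponent juggling identity
  have hterm : ∀ i ∈ Finset.Icc 1 t,
      ((2:ℝ) ^ (i - 1)) ^ (k - 1) * ((2 ^ (t - i) : ℕ) : ℝ) ^ α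
        = ((2 ^ (t - 1) : ℕ) : ℝ) ^ α * X ^ (i - 1) := by
    intro i hi
    rw [Finset.mem_Icc] at hi
    have h2 : (0:ℝ) ≤ 2 := by norm_num
    have c1 : ((2 ^ (t - i) : ℕ) : ℝ) = (2:ℝ) ^ (((t - i : ℕ)) : ℝ) := by
      push_cast
      rw [Real.rpow_natCast]
    have c2 : ((2 ^ (t - 1) : ℕ) : ℝ) = (2:ℝ) ^ (((t - 1 : ℕ)) : ℝ) := by
      push_cast
      rw [Real.rpow_natCast]
    have c3 : ((2:ℝ) ^ (i - 1)) ^ (k - 1) = (2:ℝ) ^ ((((i-1)*(k-1) : ℕ)) : ℝ) := by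
      rw [Real.rpow_natCast, pow_mul]
    rw [c1, c2, c3, hX]
    rw [← Real.rpow_natCast ((2:ℝ) ^ ((k:ℝ) - 1 - α)) (i - 1)]
    rw [← Real.rpow_mul h2, ← Real.rpow_mul h2, ← Real.rpow_mul h2]
    rw [← Real.rpow_add (by norm_num : (0:ℝ) < 2), ← Real.rpow_add (by norm_num : (0:ℝ) < 2)]
    congr 1
    have e1 : ((t - i : ℕ) : ℝ) = (t : ℝ) - (i : ℝ) := by
      rw [Nat.cast_sub hi.2]
    have e2 : ((t - 1 : ℕ) : ℝ) = (t : ℝ) - 1 := by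
      rw [Nat.cast_sub ht1]; norm_num
    have e3 : (((i-1)*(k-1) : ℕ) : ℝ) = ((i:ℝ) - 1) * ((k:ℝ) - 1) := by
      rw [Nat.cast_mul, Nat.cast_sub hi.1, Nat.cast_sub (by omega : 1 ≤ k)]; norm_num
    have e4 : ((i - 1 : ℕ) : ℝ) = (i : ℝ) - 1 := by
      rw [Nat.cast_sub hi.1]; norm_num
    rw [e1, e2, e3, e4]
    ring
  -- geometric series bound
  have hgeom : ∑ i ∈ Finset.Icc 1 t, X ^ (i - 1) ≤ (1 - X)⁻¹ := by
    have hre : ∑ i ∈ Finset.Icc 1 t, X ^ (i - 1) = ∑ j ∈ Finset.range t, X ^ j := by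
      refine Finset.sum_nbij' (fun i => i - 1) (fun j => j + 1) ?_ ?_ ?_ ?_ ?_
      · intro a ha; rw [Finset.mem_Icc] at ha; exact Finset.mem_range.2 (by omega)
      · intro a ha; rw [Finset.mem_range] at ha; exact Finset.mem_Icc.2 (by omega)
      · intro a ha; rw [Finset.mem_Icc] at ha; omega
      · intro a _; omega
      · intro a _; rfl
    rw [hre]
    have hmul := geom_sum_mul X t
    have hXt : 0 ≤ X ^ t := le_of_lt (pow_pos hX0 t)
    rw [inv_eq_one_div, le_div_iff₀ (by linarith : (0:ℝ) < 1 - X)]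
    have heq : (∑ j ∈ Finset.range t, X ^ j) * (1 - X) = 1 - X ^ t := by
      linear_combination -hmul
    linarith
  have hα0 : (0:ℝ) ≤ α := by
    have h2k : (2:ℝ) ≤ (k:ℝ) := by exact_mod_cast hk
    linarith
  have hpowle : ((2 ^ (t - 1) : ℕ) : ℝ) ^ α ≤ (n : ℝ) ^ α := by
    apply Real.rpow_le_rpow (by positivity) ?_ hα0
    exact_mod_cast le_of_lt ht2
  have hDne : D ≠ 0 := ne_of_gt hDpos
  have hFne : F ≠ 0 := ne_of_gt hFpos
  have h1Xne : (1 : ℝ) - X ≠ 0 := by linarith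
  have hone : c * (D / F) * (1 - X)⁻¹ = 1 := by
    rw [hc]
    field_simp
  have hpow1 : (0:ℝ) ≤ ((2 ^ (t - 1) : ℕ) : ℝ) ^ α := le_of_lt (Real.rpow_pos_of_pos (by positivity) α)
  have hBpos : ∀ i, (0:ℝ) ≤ ((2 ^ (t - i) : ℕ) : ℝ) ^ α := by
    intro i; positivity
  have hchain : d * (n : ℝ) ^ α < d * (n : ℝ) ^ α := by
    calc d * (n : ℝ) ^ α = (H.card : ℝ) := hcard.symm
      _ = ∑ κ ∈ K, ((H.filter (fun e => key e = κ)).card : ℝ) := by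
          rw [hfib]; push_cast; rfl
      _ < ∑ κ ∈ K, c * d * ((2 ^ (t - κ.1) : ℕ) : ℝ) ^ α :=
          Finset.sum_lt_sum_of_nonempty hKne hclass
      _ = c * d * ∑ κ ∈ K, ((2 ^ (t - κ.1) : ℕ) : ℝ) ^ α := by
          rw [Finset.mul_sum]
      _ = c * d * ∑ i ∈ Finset.Icc 1 t,
            ((K.filter (fun κ => κ.1 = i)).card : ℝ) * ((2 ^ (t - i) : ℕ) : ℝ) ^ α := by
          rw [hsum1]
      _ ≤ c * d * ∑ i ∈ Finset.Icc 1 t,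
            (((2:ℝ) ^ (i - 1)) ^ (k - 1) * D / F) * ((2 ^ (t - i) : ℕ) : ℝ) ^ α := by
          have hcd : (0:ℝ) ≤ c * d := le_of_lt (mul_pos hcpos hd)
          apply mul_le_mul_of_nonneg_left ?_ hcd
          apply Finset.sum_le_sum
          intro i hi
          apply mul_le_mul_of_nonneg_right ?_ (hBpos i)
          rw [le_div_iff₀ hFpos]
          exact hcount i hi
      _ = (c * d * (D / F)) * ∑ i ∈ Finset.Icc 1 t,
            ((2:ℝ) ^ (i - 1)) ^ (k - 1) * ((2 ^ (t - i) : ℕ) : ℝ) ^ α := by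
          rw [Finset.mul_sum, Finset.mul_sum]
          refine Finset.sum_congr rfl (fun i _ => by ring)
      _ = (c * d * (D / F)) * ∑ i ∈ Finset.Icc 1 t,
            ((2 ^ (t - 1) : ℕ) : ℝ) ^ α * X ^ (i - 1) := by
          congr 1
          exact Finset.sum_congr rfl hterm
      _ = (c * d * (D / F)) * (((2 ^ (t - 1) : ℕ) : ℝ) ^ α * ∑ i ∈ Finset.Icc 1 t, X ^ (i - 1)) := by
          rw [← Finset.mul_sum]
      _ ≤ (c * d * (D / F)) * ((n : ℝ) ^ α * (1 - X)⁻¹) := by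
          have hcdD : (0:ℝ) ≤ c * d * (D / F) :=
            le_of_lt (mul_pos (mul_pos hcpos hd) (div_pos hDpos hFpos))
          apply mul_le_mul_of_nonneg_left ?_ hcdD
          have hgnonneg : (0:ℝ) ≤ ∑ i ∈ Finset.Icc 1 t, X ^ (i - 1) :=
            Finset.sum_nonneg (fun i _ => le_of_lt (pow_pos hX0 _))
          calc ((2 ^ (t - 1) : ℕ) : ℝ) ^ α * ∑ i ∈ Finset.Icc 1 t, X ^ (i - 1)
              ≤ (n : ℝ) ^ α * ∑ i ∈ Finset.Icc 1 t, X ^ (i - 1) :=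
                mul_le_mul_of_nonneg_right hpowle hgnonneg
            _ ≤ (n : ℝ) ^ α * (1 - X)⁻¹ :=
                mul_le_mul_of_nonneg_left hgeom (le_of_lt hnapos)
      _ = (d * (n : ℝ) ^ α) * (c * (D / F) * (1 - X)⁻¹) := by ring
      _ = d * (n : ℝ) ^ α := by rw [hone, mul_one]
  exact lt_irrefl _ hchain
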